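/- Let S be a type and σ : S → S a map with σ ∘ σ = id. Let Inv be the additive group of finitely supported functions c : S → ℤ satisfying c(σ(s)) = c(s) for all s, and let Av ⊆ Inv be the subgroup of all functions of the form c + c ∘ σ where c : S → ℤ is finitely supported. Then the quotient group Inv / Av is isomorphic as an additive group to the group of finitely supported functions from the fixed-point set {s : S | σ(s) = s} to ℤ/2. (This identifies the reduced group of quaternionic cycles, the quotient of j-fixed cycles by averaged cycles, with the ℤ/2-vector space freely generated by the j-invariant irreducible subvarieties.) -/

import Mathlib

/-- The additive group of finitely supported integer-valued functions on `S` that are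
invariant under `σ`. -/
noncomputable def invariantCycles {S : Type*} (σ : S → S) : AddSubgroup (S →₀ ℤ) where
  carrier := {c | ∀ s, c (σ s) = c s}
  add_mem' := by
    intro a b ha hb s
    simp only [Finsupp.add_apply, ha s, hb s]
  zero_mem' := by intro s; simp
  neg_mem' := by
    intro a ha s
    simp only [Finsupp.neg_apply, ha s]

/-- The additive group of averaged cycles: finitely supported functions of the form
`c' + c' ∘ σ`. -/
noncomputable def averagedCycles {S : Type*} (σ : S → S) : AddSubgroup (S →₀ ℤ) where
  carrier := {c | ∃ c' : S →₀ ℤ, ∀ s, c s = c' s + c' (σ s)}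
  add_mem' := by
    rintro a b ⟨ca, hca⟩ ⟨cb, hcb⟩
    refine ⟨ca + cb, fun s => ?_⟩
    simp only [Finsupp.add_apply, hca s, hcb s]
    ring
  zero_mem' := ⟨0, fun s => by simp⟩
  neg_mem' := by
    rintro a ⟨ca, hca⟩
    refine ⟨-ca, fun s => ?_⟩
    simp only [Finsupp.neg_apply, hca s]
    ring

/-- For an involution `σ` of a set `S`, the quotient of the group of
invariant finitely supported integer-valued functions by the subgroup of averaged ones is
isomorphic to the group of finitely supported `ℤ/2`-valued functions on the fixed-point
set of `σ`. -/
theorem invariant_mod_averaged_iso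
    (S : Type*) (σ : S → S) (h : σ ∘ σ = id) :
    Nonempty ((↥(invariantCycles σ) ⧸
        ((averagedCycles σ).addSubgroupOf (invariantCycles σ))) ≃+
      ({s : S // σ s = s} →₀ ZMod 2)) := by
  classical
  have hσσ : ∀ s, σ (σ s) = s := fun s => congrFun h s
  -- the reduction homomorphism
  let φ : ↥(invariantCycles σ) →+ ({s : S // σ s = s} →₀ ZMod 2) :=
  { toFun := fun c => Finsupp.mapRange (Int.cast : ℤ → ZMod 2) (by simp)
      (Finsupp.subtypeDomain (fun s => σ s = s) c.1)
    map_zero' := by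
      ext s; simp
    map_add' := by
      intro a b; ext s
      simp [Finsupp.subtypeDomain] }
  have hφ : ∀ (c : ↥(invariantCycles σ)) (s : {s : S // σ s = s}),
      φ c s = ((c.1 s.1 : ℤ) : ZMod 2) := by
    intro c s; rfl
  have hsurj : Function.Surjective φ := by
    intro f
    set g : S →₀ ℤ := Finsupp.embDomain ⟨Subtype.val, Subtype.val_injective⟩
      (Finsupp.mapRange (fun x : ZMod 2 => (x.val : ℤ)) (by simp) f) with hg
    have hgmem : g ∈ invariantCycles σ := by
      intro s
      by_cases hs : σ s = s
      · rw [hs]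
      · have h1 : g s = 0 := by
          rw [hg]
          rw [Finsupp.embDomain_notin_range]
          rintro ⟨⟨t, ht⟩, rfl⟩
          exact hs ht
        have h2 : g (σ s) = 0 := by
          rw [hg]
          rw [Finsupp.embDomain_notin_range]
          rintro ⟨⟨t, ht⟩, het⟩
          simp only [Function.Embedding.coeFn_mk] at het
          rw [het] at ht
          rw [hσσ] at ht
          exact hs ht.symm
        rw [h1, h2]
    refine ⟨⟨g, hgmem⟩, ?_⟩
    ext s
    rw [hφ]
    have : g s.1 = ((f s).val : ℤ) := by
      rw [hg]
      have := Finsupp.embDomain_apply_self ⟨Subtype.val, Subtype.val_injective⟩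
        (Finsupp.mapRange (fun x : ZMod 2 => (x.val : ℤ)) (by simp) f) s
      simpa using this
    rw [this]
    simp [ZMod.natCast_val, ZMod.intCast_cast, ZMod.cast_id]
  have hker : (averagedCycles σ).addSubgroupOf (invariantCycles σ) = φ.ker := by
    ext c
    simp only [AddSubgroup.mem_addSubgroupOf, AddMonoidHom.mem_ker]
    constructor
    · rintro ⟨c', hc'⟩
      ext s
      rw [hφ]
      have hfix : σ s.1 = s.1 := s.2
      have : c.1 s.1 = 2 * c' s.1 := by rw [hc' s.1, hfix]; ring
      rw [this, Int.cast_mul, Int.cast_two]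
      rw [show (2 : ZMod 2) = 0 by decide]
      simp
    · intro hc
      -- all fixed values of c are even
      have heven : ∀ s : S, σ s = s → (2 : ℤ) ∣ c.1 s := by
        intro s hs
        have : ((c.1 s : ℤ) : ZMod 2) = 0 := by
          have := DFunLike.congr_fun hc ⟨s, hs⟩
          rw [hφ] at this
          simpa using this
        exact (ZMod.intCast_zmod_eq_zero_iff_dvd _ 2).mp this
      letI : LinearOrder S := IsWellOrder.linearOrder WellOrderingRel
      refine ⟨Finsupp.onFinset c.1.support
        (fun s => if σ s = s then c.1 s / 2 else if s < σ s then c.1 s else 0) ?_, ?_⟩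
      · intro s hs
        by_cases h1 : σ s = s
        · rw [if_pos h1] at hs
          rw [Finsupp.mem_support_iff]
          intro h0
          rw [h0] at hs; simp at hs
        · rw [if_neg h1] at hs
          by_cases h2 : s < σ s
          · rw [if_pos h2] at hs
            rwa [Finsupp.mem_support_iff]
          · rw [if_neg h2] at hs; simp at hs
      · intro s
        simp only [Finsupp.onFinset_apply]
        by_cases h1 : σ s = s
        · rw [if_pos h1, h1, if_pos h1]
          obtain ⟨k, hk⟩ := heven s h1
          rw [hk]
          omega
        · have h1' : ¬ σ (σ s) = σ s := by
            rw [hσσ]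
            intro hh; exact h1 hh.symm
          rw [if_neg h1, if_neg h1']
          rcases lt_trichotomy s (σ s) with hlt | heq | hgt
          · rw [if_pos hlt, if_neg (by rw [hσσ]; exact not_lt.mpr hlt.le)]
            ring
          · exact absurd heq.symm h1
          · rw [if_neg (not_lt.mpr hgt.le), if_pos (by rw [hσσ]; exact hgt)]
            rw [c.2 s]
            ring
  rw [hker]
  exact ⟨QuotientAddGroup.quotientKerEquivOfSurjective φ hsurj⟩
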